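/- arXiv:2504.00302 — 6 statements merged into one kernel-verified Lean document; each statement's English description precedes it below -/
import Mathlib

section
/- Let x ∈ ℝ^m and V ∈ ℝ^{m×n} be entrywise nonnegative, and let s^{(t)} ∈ ℝ^n be entrywise strictly positive. Define s^{(t+1)}_j = s^{(t)}_j (Vᵀx)_j / (VᵀV s^{(t)})_j, assuming (VᵀV s^{(t)})_j > 0 for all j. Then ‖x − V s^{(t+1)}‖² ≤ ‖x − V s^{(t)}‖². -/
open Matrix

theorem multiplicative_update_monotone (m n : ℕ)
    (x : Fin m → ℝ) (V : Matrix (Fin m) (Fin n) ℝ)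
    (hx : ∀ i, 0 ≤ x i) (hV : ∀ i j, 0 ≤ V i j)
    (s : Fin n → ℝ) (hs : ∀ j, 0 < s j)
    (hden : ∀ j, 0 < Vᵀ.mulVec (V.mulVec s) j)
    (s' : Fin n → ℝ)
    (hs' : ∀ j, s' j = s j * (Vᵀ.mulVec x j) / (Vᵀ.mulVec (V.mulVec s) j)) :
    ∑ i, (x i - V.mulVec s' i) ^ 2 ≤ ∑ i, (x i - V.mulVec s i) ^ 2 := by
  classical
  set A : Fin n → Fin n → ℝ := fun j k => ∑ i, V i j * V i k with hA
  set b : Fin n → ℝ := fun j => ∑ i, V i j * x i with hb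
  set d : Fin n → ℝ := fun j => ∑ i, V i j * (∑ k, V i k * s k) with hd
  have hbv : ∀ j, Vᵀ.mulVec x j = b j := by
    intro j; simp [Matrix.mulVec, dotProduct, hb]
  have hdv : ∀ j, Vᵀ.mulVec (V.mulVec s) j = d j := by
    intro j; simp [Matrix.mulVec, dotProduct, hd]
  have hd0 : ∀ j, 0 < d j := fun j => hdv j ▸ hden j
  set u : Fin n → ℝ := fun j => s' j - s j with hu
  have hu' : ∀ j, u j = s j * (b j - d j) / d j := by
    intro j
    have h := hs' j
    rw [hbv j, hdv j] at h
    have : u j = s j * b j / d j - s j := by simp [hu, h]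
    rw [this]
    have hne : d j ≠ 0 := (hd0 j).ne'
    field_simp
  have hAsym : ∀ j k, A j k = A k j := by
    intro j k; simp [hA]; apply Finset.sum_congr rfl; intro i _; ring
  have hA0 : ∀ j k, 0 ≤ A j k := by
    intro j k
    exact Finset.sum_nonneg fun i _ => mul_nonneg (hV i j) (hV i k)
  have hdA : ∀ j, d j = ∑ k, A j k * s k := by
    intro j
    simp only [hd, hA, Finset.mul_sum, Finset.sum_mul]
    rw [Finset.sum_comm]
    apply Finset.sum_congr rfl; intro k _
    apply Finset.sum_congr rfl; intro i _; ring
  have hms : ∀ i, V.mulVec s i = ∑ k, V i k * s k := by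
    intro i; simp [Matrix.mulVec, dotProduct]
  have hms' : ∀ i, V.mulVec s' i = V.mulVec s i + ∑ k, V i k * u k := by
    intro i
    simp only [Matrix.mulVec, dotProduct, hu]
    rw [← Finset.sum_add_distrib]
    apply Finset.sum_congr rfl; intro k _; ring
  -- cross term
  have cross : ∑ i, (x i - V.mulVec s i) * (∑ k, V i k * u k)
      = ∑ j, (b j - d j) * u j := by
    simp only [Finset.mul_sum]
    rw [Finset.sum_comm]
    apply Finset.sum_congr rfl; intro j _
    have : ∑ i, (x i - V.mulVec s i) * (V i j * u j)
        = (∑ i, V i j * (x i - V.mulVec s i)) * u j := by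
      rw [Finset.sum_mul]
      apply Finset.sum_congr rfl; intro i _; ring
    rw [this]
    congr 1
    simp only [hms, mul_sub, Finset.sum_sub_distrib, hb, hd]
  -- quadratic term
  have square : ∑ i, (∑ k, V i k * u k) ^ 2
      = ∑ j, ∑ k, A j k * (u j * u k) := by
    have h1 : ∀ i, (∑ k, V i k * u k) ^ 2 = ∑ j, ∑ k, V i j * V i k * (u j * u k) := by
      intro i
      rw [sq, Finset.sum_mul_sum]
      apply Finset.sum_congr rfl; intro j _
      apply Finset.sum_congr rfl; intro k _
      ring
    simp only [h1]
    rw [Finset.sum_comm]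
    apply Finset.sum_congr rfl; intro j _
    rw [Finset.sum_comm]
    apply Finset.sum_congr rfl; intro k _
    simp only [hA]
    rw [Finset.sum_mul]
  have expand : ∑ i, (x i - V.mulVec s' i) ^ 2
      = ∑ i, (x i - V.mulVec s i) ^ 2
        - 2 * ∑ j, (b j - d j) * u j
        + ∑ j, ∑ k, A j k * (u j * u k) := by
    rw [← cross, ← square, Finset.mul_sum,
      ← Finset.sum_sub_distrib, ← Finset.sum_add_distrib]
    apply Finset.sum_congr rfl; intro i _
    rw [hms' i]; ring
  -- key quadratic bound
  have quad_le : ∑ j, ∑ k, A j k * (u j * u k) ≤ ∑ j, d j * (u j) ^ 2 / s j := by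
    have step : ∀ j k, A j k * (u j * u k)
        ≤ A j k * (s k * (u j) ^ 2 / (2 * s j) + s j * (u k) ^ 2 / (2 * s k)) := by
      intro j k
      apply mul_le_mul_of_nonneg_left _ (hA0 j k)
      have hsj := hs j
      have hsk := hs k
      rw [div_add_div _ _ (by positivity) (by positivity), le_div_iff₀ (by positivity)]
      nlinarith [sq_nonneg (s k * u j - s j * u k)]
    calc ∑ j, ∑ k, A j k * (u j * u k)
        ≤ ∑ j, ∑ k, A j k * (s k * (u j) ^ 2 / (2 * s j) + s j * (u k) ^ 2 / (2 * s k)) := by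
          apply Finset.sum_le_sum; intro j _
          apply Finset.sum_le_sum; intro k _
          exact step j k
      _ = ∑ j, d j * (u j) ^ 2 / s j := by
          have split : ∀ j, ∑ k, A j k * (s k * (u j) ^ 2 / (2 * s j) + s j * (u k) ^ 2 / (2 * s k))
              = d j * ((u j) ^ 2 / (2 * s j)) + ∑ k, A j k * s j * ((u k) ^ 2 / (2 * s k)) := by
            intro j
            simp only [mul_add]
            rw [Finset.sum_add_distrib]
            congr 1
            · rw [hdA j, Finset.sum_mul]
              apply Finset.sum_congr rfl; intro k _; ring
            · apply Finset.sum_congr rfl; intro k _; ring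
          simp only [split]
          rw [Finset.sum_add_distrib, Finset.sum_comm]
          have second : ∑ k, ∑ j, A k j * s j * ((u k) ^ 2 / (2 * s k))
              = ∑ k, d k * ((u k) ^ 2 / (2 * s k)) := by
            apply Finset.sum_congr rfl; intro k _
            rw [hdA k, Finset.sum_mul]
          have swap : ∑ k, ∑ j, A j k * s j * ((u k) ^ 2 / (2 * s k))
              = ∑ k, ∑ j, A k j * s j * ((u k) ^ 2 / (2 * s k)) := by
            apply Finset.sum_congr rfl; intro k _
            apply Finset.sum_congr rfl; intro j _
            rw [hAsym j k]
          rw [swap, second, ← Finset.sum_add_distrib]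
          apply Finset.sum_congr rfl; intro j _
          have hsj := (hs j).ne'
          field_simp
          ring
  -- finishing: the descent quantity is nonpositive
  have descent : ∑ j, d j * (u j) ^ 2 / s j - 2 * ∑ j, (b j - d j) * u j ≤ 0 := by
    rw [Finset.mul_sum, ← Finset.sum_sub_distrib]
    apply Finset.sum_nonpos
    intro j _
    rw [hu' j]
    have hdj := hd0 j
    have hsj := hs j
    have key : d j * (s j * (b j - d j) / d j) ^ 2 / s j
        - 2 * ((b j - d j) * (s j * (b j - d j) / d j))
        = -(s j * (b j - d j) ^ 2 / d j) := by
      field_simp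
      ring
    rw [key]
    have : 0 ≤ s j * (b j - d j) ^ 2 / d j := by positivity
    linarith
  rw [expand]
  linarith [quad_le, descent]
end

section
/- Let V ∈ ℝ^{m×n} be nonnegative, s, s⁰ ∈ ℝ^n with s nonnegative and s⁰ entrywise strictly positive. Then ‖V s‖² ≤ ∑_i (V (s²/s⁰))_i · (V s⁰)_i, where s²/s⁰ denotes the vector with entries s_j²/s⁰_j. -/
theorem quadratic_majorization (m n : ℕ)
    (V : Matrix (Fin m) (Fin n) ℝ) (hV : ∀ i j, 0 ≤ V i j)
    (s s0 : Fin n → ℝ) (hs : ∀ j, 0 ≤ s j) (hs0 : ∀ j, 0 < s0 j) :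
    ∑ i, (V.mulVec s i) ^ 2 ≤
      ∑ i, (V.mulVec (fun j => s j ^ 2 / s0 j) i) * (V.mulVec s0 i) := by
  apply Finset.sum_le_sum
  intro i _
  simp only [Matrix.mulVec, dotProduct]
  have key := Finset.sum_mul_sq_le_sq_mul_sq Finset.univ
    (fun j => Real.sqrt (V i j) * s j / Real.sqrt (s0 j))
    (fun j => Real.sqrt (V i j) * Real.sqrt (s0 j))
  have h1 : ∀ j, (Real.sqrt (V i j) * s j / Real.sqrt (s0 j)) *
      (Real.sqrt (V i j) * Real.sqrt (s0 j)) = V i j * s j := by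
    intro j
    have hne : Real.sqrt (s0 j) ≠ 0 := ne_of_gt (Real.sqrt_pos.2 (hs0 j))
    have hv : Real.sqrt (V i j) * Real.sqrt (V i j) = V i j :=
      Real.mul_self_sqrt (hV i j)
    field_simp
    linear_combination (s j) * hv
  have h2 : ∀ j, (Real.sqrt (V i j) * s j / Real.sqrt (s0 j)) ^ 2 =
      V i j * (s j ^ 2 / s0 j) := by
    intro j
    rw [div_pow, mul_pow, Real.sq_sqrt (hV i j), Real.sq_sqrt (hs0 j).le]
    ring
  have h3 : ∀ j, (Real.sqrt (V i j) * Real.sqrt (s0 j)) ^ 2 = V i j * s0 j := by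
    intro j
    rw [mul_pow, Real.sq_sqrt (hV i j), Real.sq_sqrt (hs0 j).le]
  simp only [h1, h2, h3] at key
  exact key
end

section
/- Let V ∈ ℝ^{m×n} be nonnegative and s⁰ ∈ ℝ^n entrywise strictly positive. Then the function s ↦ ⟨V(s²/s⁰), Vs⁰⟩ on ℝ^n is a convex quadratic form; in particular its Hessian is the diagonal matrix with entries 2(VᵀVs⁰)_j / s⁰_j, which is positive semidefinite. -/
open Matrix

theorem quadratic_term_convex (m n : ℕ)
    (V : Matrix (Fin m) (Fin n) ℝ) (hV : ∀ i j, 0 ≤ V i j)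
    (s0 : Fin n → ℝ) (hs0 : ∀ j, 0 < s0 j) :
    ConvexOn ℝ Set.univ
      (fun s : Fin n → ℝ =>
        ∑ i, (V.mulVec (fun j => s j ^ 2 / s0 j) i) * (V.mulVec s0 i)) ∧
    (Matrix.diagonal (fun j => 2 * Vᵀ.mulVec (V.mulVec s0) j / s0 j)).PosSemidef := by
  have hVs0 : ∀ i, 0 ≤ V.mulVec s0 i := fun i => by
    simp only [Matrix.mulVec, dotProduct]
    exact Finset.sum_nonneg fun j _ => mul_nonneg (hV i j) (hs0 j).le
  constructor
  · have hrw : (fun s : Fin n → ℝ =>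
        ∑ i, (V.mulVec (fun j => s j ^ 2 / s0 j) i) * (V.mulVec s0 i)) =
        fun s => ∑ j, ((∑ i, V i j * V.mulVec s0 i) / s0 j) * s j ^ 2 := by
      funext s
      simp only [Matrix.mulVec, dotProduct, Finset.sum_mul, Finset.sum_div]
      rw [Finset.sum_comm]
      refine Finset.sum_congr rfl fun j _ => Finset.sum_congr rfl fun i _ => ?_
      field_simp
    rw [hrw]
    have key : ConvexOn ℝ Set.univ
        (∑ j, fun s : Fin n → ℝ => ((∑ i, V i j * V.mulVec s0 i) / s0 j) * s j ^ 2) := by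
      refine Finset.univ.sum_induction _ (fun f => ConvexOn ℝ Set.univ f)
        (fun f g hf hg => hf.add hg) (convexOn_const 0 convex_univ) fun j _ => ?_
      have hc : 0 ≤ (∑ i, V i j * V.mulVec s0 i) / s0 j :=
        div_nonneg (Finset.sum_nonneg fun i _ => mul_nonneg (hV i j) (hVs0 i)) (hs0 j).le
      have hsq : ConvexOn ℝ Set.univ (fun s : Fin n → ℝ => s j ^ 2) := by
        have := (Even.convexOn_pow (by norm_num : Even 2)).comp_affineMap
          ((LinearMap.proj j : (Fin n → ℝ) →ₗ[ℝ] ℝ).toAffineMap)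
        simpa [Function.comp_def] using this
      simpa [smul_eq_mul] using hsq.smul hc
    simpa [← Finset.sum_fn] using key
  · rw [Matrix.posSemidef_diagonal_iff]
    intro j
    refine div_nonneg (mul_nonneg (by norm_num) ?_) (hs0 j).le
    simp only [Matrix.mulVec, dotProduct, Matrix.transpose_apply]
    exact Finset.sum_nonneg fun i _ => mul_nonneg (hV i j) (hVs0 i)
end

section
/- Let x ∈ ℝ^m, V ∈ ℝ^{m×n} nonnegative, and s⁰ ∈ ℝ^n entrywise strictly positive with (VᵀVs⁰)_j > 0 for all j. Then s* given by s*_j = s⁰_j (Vᵀx)_j/(VᵀVs⁰)_j is a global minimizer of Q(· | s⁰) = ‖x‖² − 2⟨x, V·⟩ + ⟨V(·²/s⁰), Vs⁰⟩ over all of ℝ^n, and s* is entrywise nonnegative whenever x is nonnegative. -/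
open Matrix

theorem update_minimizes_surrogate (m n : ℕ)
    (x : Fin m → ℝ) (V : Matrix (Fin m) (Fin n) ℝ) (hV : ∀ i j, 0 ≤ V i j)
    (s0 : Fin n → ℝ) (hs0 : ∀ j, 0 < s0 j)
    (hden : ∀ j, 0 < Vᵀ.mulVec (V.mulVec s0) j)
    (Q : (Fin n → ℝ) → ℝ)
    (hQ : ∀ s, Q s =
      (∑ i, x i ^ 2) - 2 * (∑ i, x i * V.mulVec s i) +
        ∑ i, (V.mulVec (fun j => s j ^ 2 / s0 j) i) * (V.mulVec s0 i))
    (sstar : Fin n → ℝ)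
    (hsstar : ∀ j, sstar j = s0 j * (Vᵀ.mulVec x j) / (Vᵀ.mulVec (V.mulVec s0) j)) :
    (∀ s : Fin n → ℝ, Q sstar ≤ Q s) ∧
      ((∀ i, 0 ≤ x i) → ∀ j, 0 ≤ sstar j) := by
  set b : Fin n → ℝ := Vᵀ.mulVec x with hb
  set d : Fin n → ℝ := Vᵀ.mulVec (V.mulVec s0) with hd
  have hbj : ∀ j, b j = ∑ i, V i j * x i := fun j => rfl
  have hdj : ∀ j, d j = ∑ i, V i j * (V.mulVec s0) i := fun j => rfl
  have hmv : ∀ (f : Fin n → ℝ) i, V.mulVec f i = ∑ j, V i j * f j := fun f i => rfl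
  have key : ∀ s, Q s = (∑ i, x i ^ 2) +
      ∑ j, ((d j / s0 j) * s j ^ 2 - 2 * (b j * s j)) := by
    intro s
    rw [hQ]
    have h1 : ∑ i, x i * V.mulVec s i = ∑ j, b j * s j := by
      simp_rw [hmv, Finset.mul_sum]
      rw [Finset.sum_comm]
      refine Finset.sum_congr rfl fun j _ => ?_
      rw [hbj j, Finset.sum_mul]
      exact Finset.sum_congr rfl fun i _ => by ring
    have h2 : ∑ i, (V.mulVec (fun j => s j ^ 2 / s0 j) i) * (V.mulVec s0 i)
        = ∑ j, d j * (s j ^ 2 / s0 j) := by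
      have hexp : ∀ i, (V.mulVec (fun j => s j ^ 2 / s0 j) i) * (V.mulVec s0 i)
          = ∑ j, V i j * (s j ^ 2 / s0 j) * V.mulVec s0 i := by
        intro i
        rw [hmv, Finset.sum_mul]
      simp_rw [hexp]
      rw [Finset.sum_comm]
      refine Finset.sum_congr rfl fun j _ => ?_
      rw [hdj j, Finset.sum_mul]
      exact Finset.sum_congr rfl fun i _ => by ring
    have h3 : ∀ j, d j * (s j ^ 2 / s0 j) = (d j / s0 j) * s j ^ 2 := by
      intro j
      field_simp
    rw [h1, h2]
    simp_rw [h3, Finset.sum_sub_distrib, ← Finset.mul_sum]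
    ring
  constructor
  · intro s
    rw [key s, key sstar]
    apply add_le_add_right
    apply Finset.sum_le_sum
    intro j _
    have ha : 0 < d j / s0 j := div_pos (hden j) (hs0 j)
    have hab : (d j / s0 j) * sstar j = b j := by
      rw [hsstar j]
      have h1 : d j ≠ 0 := (hden j).ne'
      have h2 : s0 j ≠ 0 := (hs0 j).ne'
      field_simp
    rw [← hab]
    nlinarith [mul_nonneg ha.le (sq_nonneg (s j - sstar j))]
  · intro hx j
    rw [hsstar j]
    have hbnn : 0 ≤ b j := by
      rw [hbj j]
      exact Finset.sum_nonneg fun i _ => mul_nonneg (hV i j) (hx i)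
    exact div_nonneg (mul_nonneg (hs0 j).le hbnn) (hden j).le
end

section
/- Let x ∈ ℝ^m be nonnegative, V ∈ ℝ^{m×n} nonnegative with (VᵀV s)_j > 0 for every entrywise positive s ∈ ℝ^n and every j, and let s^{(0)} ∈ ℝ^n be entrywise strictly positive. Define s^{(t+1)}_j = s^{(t)}_j (Vᵀx)_j/(VᵀVs^{(t)})_j whenever s^{(t)} is entrywise positive (and s^{(t+1)}_j = 0 if s^{(t)}_j = 0, in which case it remains 0 forever). Then the sequence e_t = ‖x − V s^{(t)}‖² is non-increasing and hence converges. -/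
open Matrix Finset


/-- Algebraic expansion of the squared error after a perturbation `w` of `u`. -/
lemma nmf_expand {m n : ℕ} (x : Fin m → ℝ) (V : Matrix (Fin m) (Fin n) ℝ)
    (u w : Fin n → ℝ) :
    ∑ i, (x i - ∑ j, V i j * (u j + w j)) ^ 2
      = ∑ i, (x i - ∑ j, V i j * u j) ^ 2
        + 2 * ∑ j, w j * ((∑ i, V i j * (∑ k, V i k * u k)) - ∑ i, V i j * x i)
        + ∑ i, (∑ j, V i j * w j) ^ 2 := by
  have hsplit : ∀ i, (∑ j, V i j * (u j + w j))
      = (∑ j, V i j * u j) + ∑ j, V i j * w j := by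
    intro i
    rw [← Finset.sum_add_distrib]
    exact Finset.sum_congr rfl fun j _ => by ring
  have swapA : ∑ i, (∑ j, V i j * w j) * x i
      = ∑ j, w j * (∑ i, V i j * x i) := by
    simp_rw [Finset.sum_mul]
    rw [Finset.sum_comm]
    exact Finset.sum_congr rfl fun j _ => by
      rw [Finset.mul_sum]; exact Finset.sum_congr rfl fun i _ => by ring
  have swapB : ∑ i, (∑ j, V i j * w j) * (∑ k, V i k * u k)
      = ∑ j, w j * (∑ i, V i j * (∑ k, V i k * u k)) := by
    simp_rw [Finset.sum_mul]
    rw [Finset.sum_comm]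
    exact Finset.sum_congr rfl fun j _ => by
      rw [Finset.mul_sum]; exact Finset.sum_congr rfl fun i _ => by ring
  have hterm : ∀ i, (x i - ((∑ j, V i j * u j) + ∑ j, V i j * w j)) ^ 2
      = (x i - ∑ j, V i j * u j) ^ 2
        + ((∑ j, V i j * w j) ^ 2
          - 2 * ((∑ j, V i j * w j) * x i)
          + 2 * ((∑ j, V i j * w j) * (∑ k, V i k * u k))) := by
    intro i; ring
  simp_rw [hsplit, hterm]
  rw [Finset.sum_add_distrib]
  have : ∑ i, ((∑ j, V i j * w j) ^ 2
      - 2 * ((∑ j, V i j * w j) * x i)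
      + 2 * ((∑ j, V i j * w j) * (∑ k, V i k * u k)))
      = (∑ i, (∑ j, V i j * w j) ^ 2)
        - 2 * (∑ i, (∑ j, V i j * w j) * x i)
        + 2 * (∑ i, (∑ j, V i j * w j) * (∑ k, V i k * u k)) := by
    rw [Finset.sum_add_distrib, Finset.sum_sub_distrib, Finset.mul_sum, Finset.mul_sum]
  rw [this, swapA, swapB]
  have hsub : ∑ j, w j * ((∑ i, V i j * (∑ k, V i k * u k)) - ∑ i, V i j * x i)
      = (∑ j, w j * (∑ i, V i j * (∑ k, V i k * u k)))
        - ∑ j, w j * (∑ i, V i j * x i) := by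
    rw [← Finset.sum_sub_distrib]
    exact Finset.sum_congr rfl fun j _ => by ring
  rw [hsub]
  ring

/-- One multiplicative-update step does not increase the squared error. -/
lemma nmf_step {m n : ℕ} (x : Fin m → ℝ) (hx : ∀ i, 0 ≤ x i)
    (V : Matrix (Fin m) (Fin n) ℝ) (hV : ∀ i j, 0 ≤ V i j)
    (s s' : Fin n → ℝ) (hs : ∀ j, 0 ≤ s j)
    (hs' : ∀ j, s' j = s j * (∑ i, V i j * x i) / (∑ i, V i j * (∑ k, V i k * s k))) :
    ∑ i, (x i - ∑ j, V i j * s' j) ^ 2 ≤ ∑ i, (x i - ∑ j, V i j * s j) ^ 2 := by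
  classical
  set b : Fin n → ℝ := fun j => ∑ i, V i j * x i with hbdef
  set c : Fin n → ℝ := fun j => ∑ i, V i j * (∑ k, V i k * s k) with hcdef
  set d : Fin n → ℝ := fun j => s' j - s j with hddef
  have hVs : ∀ i, 0 ≤ ∑ k, V i k * s k := fun i =>
    Finset.sum_nonneg fun k _ => mul_nonneg (hV i k) (hs k)
  have hc0 : ∀ j, 0 ≤ c j := fun j =>
    Finset.sum_nonneg fun i _ => mul_nonneg (hV i j) (hVs i)
  have hb : ∀ j, b j = ∑ i, V i j * x i := fun _ => rfl
  have hcc : ∀ j, c j = ∑ i, V i j * (∑ k, V i k * s k) := fun _ => rfl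
  have hdd : ∀ j, d j = s' j - s j := fun _ => rfl
  have hd0 : ∀ j, s j = 0 → d j = 0 := by
    intro j hj
    simp [hdd, hs' j, hj]
  -- the "positive support"
  set P : Finset (Fin n) := Finset.univ.filter (fun j => 0 < s j) with hPdef
  have hdP : ∀ j ∉ P, d j = 0 := by
    intro j hj
    apply hd0
    by_contra h
    exact hj (Finset.mem_filter.mpr ⟨Finset.mem_univ j, lt_of_le_of_ne (hs j) (Ne.symm h)⟩)
  -- Cauchy-Schwarz per row
  have CS : ∀ i, (∑ j, V i j * d j) ^ 2
      ≤ (∑ k, V i k * s k) * (∑ j ∈ P, V i j * d j ^ 2 / s j) := by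
    intro i
    have h1 : ∑ j, V i j * d j = ∑ j ∈ P, V i j * d j := by
      refine (Finset.sum_subset (Finset.subset_univ P) ?_).symm
      intro j _ hj
      rw [hdP j hj, mul_zero]
    rw [h1]
    have h2 : ∑ j ∈ P, V i j * d j
        = ∑ j ∈ P, Real.sqrt (V i j * s j) * (Real.sqrt (V i j / s j) * d j) := by
      refine Finset.sum_congr rfl fun j hj => ?_
      have hsj : 0 < s j := (Finset.mem_filter.mp hj).2
      rw [← mul_assoc, ← Real.sqrt_mul (mul_nonneg (hV i j) hsj.le)]
      have : V i j * s j * (V i j / s j) = (V i j) ^ 2 := by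
        field_simp
      rw [this, Real.sqrt_sq (hV i j)]
    rw [h2]
    calc (∑ j ∈ P, Real.sqrt (V i j * s j) * (Real.sqrt (V i j / s j) * d j)) ^ 2
        ≤ (∑ j ∈ P, Real.sqrt (V i j * s j) ^ 2)
          * (∑ j ∈ P, (Real.sqrt (V i j / s j) * d j) ^ 2) :=
          Finset.sum_mul_sq_le_sq_mul_sq _ _ _
      _ ≤ (∑ k, V i k * s k) * (∑ j ∈ P, V i j * d j ^ 2 / s j) := by
          apply mul_le_mul
          · calc ∑ j ∈ P, Real.sqrt (V i j * s j) ^ 2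
                = ∑ j ∈ P, V i j * s j := by
                  refine Finset.sum_congr rfl fun j hj => ?_
                  exact Real.sq_sqrt (mul_nonneg (hV i j) (hs j))
              _ ≤ ∑ k, V i k * s k :=
                  Finset.sum_le_sum_of_subset_of_nonneg (Finset.subset_univ P)
                    (fun k _ _ => mul_nonneg (hV i k) (hs k))
          · refine le_of_eq (Finset.sum_congr rfl fun j hj => ?_)
            have hsj : 0 < s j := (Finset.mem_filter.mp hj).2
            rw [mul_pow, Real.sq_sqrt (div_nonneg (hV i j) hsj.le)]
            ring
          · exact Finset.sum_nonneg fun j _ => sq_nonneg _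
          · exact hVs i
  -- sum the CS bound over rows and swap sums
  have CSsum : ∑ i, (∑ j, V i j * d j) ^ 2 ≤ ∑ j ∈ P, c j * d j ^ 2 / s j := by
    calc ∑ i, (∑ j, V i j * d j) ^ 2
        ≤ ∑ i, (∑ k, V i k * s k) * (∑ j ∈ P, V i j * d j ^ 2 / s j) :=
          Finset.sum_le_sum fun i _ => CS i
      _ = ∑ j ∈ P, c j * d j ^ 2 / s j := by
          simp_rw [Finset.mul_sum]
          rw [Finset.sum_comm]
          refine Finset.sum_congr rfl fun j hj => ?_
          calc ∑ i, (∑ k, V i k * s k) * (V i j * d j ^ 2 / s j)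
              = ∑ i, (V i j * (∑ k, V i k * s k)) * (d j ^ 2 / s j) :=
                Finset.sum_congr rfl fun i _ => by ring
            _ = (∑ i, V i j * (∑ k, V i k * s k)) * (d j ^ 2 / s j) :=
                (Finset.sum_mul _ _ _).symm
            _ = c j * d j ^ 2 / s j := (mul_div_assoc _ _ _).symm
  -- per-coordinate bound on P
  have hper : ∀ j ∈ P, 2 * (d j * (c j - b j)) + c j * d j ^ 2 / s j ≤ 0 := by
    intro j hj
    have hsj : 0 < s j := (Finset.mem_filter.mp hj).2
    rcases eq_or_lt_of_le (hc0 j) with hcz | hcp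
    · -- c j = 0 forces column j of V to vanish, hence b j = 0
      have hall : ∀ i ∈ Finset.univ, V i j * (∑ k, V i k * s k) = 0 :=
        (Finset.sum_eq_zero_iff_of_nonneg
          (fun i _ => mul_nonneg (hV i j) (hVs i))).mp hcz.symm
      have hVz : ∀ i, V i j = 0 := by
        intro i
        by_contra h
        have hVp : 0 < V i j := lt_of_le_of_ne (hV i j) (Ne.symm h)
        have h1 : V i j * s j ≤ ∑ k, V i k * s k :=
          Finset.single_le_sum (fun k _ => mul_nonneg (hV i k) (hs k))
            (Finset.mem_univ j)
        have h2 := hall i (Finset.mem_univ i)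
        have h3 : ∑ k, V i k * s k = 0 := by
          rcases mul_eq_zero.mp h2 with h' | h'
          · exact absurd h' h
          · exact h'
        nlinarith [mul_pos hVp hsj]
      have hbz : b j = 0 := by
        rw [hb j]
        exact Finset.sum_eq_zero fun i _ => by rw [hVz i, zero_mul]
      rw [hbz, ← hcz]
      simp
    · -- c j > 0 : the genuine Lee–Seung computation
      have hdj : d j = s j * (b j - c j) / c j := by
        rw [hdd j, hs' j, ← hb j, ← hcc j]
        field_simp [hcp.ne']
      have key : 2 * (d j * (c j - b j)) + c j * d j ^ 2 / s j
          = -(s j * (b j - c j) ^ 2 / c j) := by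
        rw [hdj]
        field_simp [hcp.ne', hsj.ne']
        ring
      rw [key]
      have : 0 ≤ s j * (b j - c j) ^ 2 / c j := by positivity
      linarith
  -- assemble
  have expand := nmf_expand x V s d
  have hsd : ∀ j, s j + d j = s' j := fun j => by rw [hdd j]; ring
  simp_rw [hsd] at expand
  simp_rw [← hb, ← hcc] at expand
  rw [expand]
  have hP2 : ∑ j, d j * (c j - b j) = ∑ j ∈ P, d j * (c j - b j) := by
    refine (Finset.sum_subset (Finset.subset_univ P) ?_).symm
    intro j _ hj
    rw [hdP j hj, zero_mul]
  have : 2 * ∑ j, d j * (c j - b j) + ∑ i, (∑ j, V i j * d j) ^ 2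
      ≤ ∑ j ∈ P, (2 * (d j * (c j - b j)) + c j * d j ^ 2 / s j) := by
    rw [hP2, Finset.sum_add_distrib]
    have h2 : 2 * ∑ j ∈ P, d j * (c j - b j) = ∑ j ∈ P, 2 * (d j * (c j - b j)) := by
      rw [Finset.mul_sum]
    linarith [CSsum]
  have hfin : ∑ j ∈ P, (2 * (d j * (c j - b j)) + c j * d j ^ 2 / s j) ≤ 0 :=
    Finset.sum_nonpos hper
  linarith

theorem error_sequence_converges (m n : ℕ)
    (x : Fin m → ℝ) (hx : ∀ i, 0 ≤ x i)
    (V : Matrix (Fin m) (Fin n) ℝ) (hV : ∀ i j, 0 ≤ V i j)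
    (hpos : ∀ s : Fin n → ℝ, (∀ j, 0 < s j) → ∀ j, 0 < Vᵀ.mulVec (V.mulVec s) j)
    (s : ℕ → Fin n → ℝ) (hs0 : ∀ j, 0 < s 0 j)
    (hrec : ∀ t j, s (t + 1) j =
      s t j * (Vᵀ.mulVec x j) / (Vᵀ.mulVec (V.mulVec (s t)) j))
    (e : ℕ → ℝ)
    (he : ∀ t, e t = ∑ i, (x i - V.mulVec (s t) i) ^ 2) :
    (∀ t, e (t + 1) ≤ e t) ∧ ∃ L : ℝ, Filter.Tendsto e Filter.atTop (nhds L) := by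
  have hbv : ∀ j, Vᵀ.mulVec x j = ∑ i, V i j * x i := by
    intro j
    simp [Matrix.mulVec, dotProduct, Matrix.transpose_apply]
  have hcv : ∀ (v : Fin n → ℝ) (j),
      Vᵀ.mulVec (V.mulVec v) j = ∑ i, V i j * (∑ k, V i k * v k) := by
    intro v j
    simp [Matrix.mulVec, dotProduct, Matrix.transpose_apply]
  have hev : ∀ (v : Fin n → ℝ) (i), V.mulVec v i = ∑ j, V i j * v j := by
    intro v i
    simp [Matrix.mulVec, dotProduct]
  -- nonnegativity of all iterates
  have hnn : ∀ t j, 0 ≤ s t j := by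
    intro t
    induction t with
    | zero => exact fun j => (hs0 j).le
    | succ t ih =>
      intro j
      rw [hrec t j]
      apply div_nonneg
      · apply mul_nonneg (ih j)
        rw [hbv j]
        exact Finset.sum_nonneg fun i _ => mul_nonneg (hV i j) (hx i)
      · rw [hcv (s t) j]
        refine Finset.sum_nonneg fun i _ => mul_nonneg (hV i j) ?_
        exact Finset.sum_nonneg fun k _ => mul_nonneg (hV i k) (ih k)
  have hdec : ∀ t, e (t + 1) ≤ e t := by
    intro t
    rw [he t, he (t + 1)]
    simp_rw [hev]
    apply nmf_step x hx V hV (s t) (s (t + 1)) (hnn t)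
    intro j
    rw [hrec t j, hbv j, hcv (s t) j]
  refine ⟨hdec, ⟨⨅ t, e t, tendsto_atTop_ciInf (antitone_nat_of_succ_le hdec) ?_⟩⟩
  refine ⟨0, ?_⟩
  rintro y ⟨t, rfl⟩
  rw [he t]
  positivity
end

section
/- Let x ∈ ℝ^m be nonnegative and V ∈ ℝ^{m×n} nonnegative, and suppose s ∈ ℝ^n is entrywise strictly positive with (VᵀVs)_j > 0 for all j. If ‖x − V s'‖² = ‖x − V s‖², where s'_j = s_j (Vᵀx)_j/(VᵀVs)_j, and the surrogate Q(· | s) is strictly convex, then s' = s and Vᵀ(x − Vs) = 0. -/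
open Matrix

theorem equality_case_fixed_point (m n : ℕ)
    (x : Fin m → ℝ) (hx : ∀ i, 0 ≤ x i)
    (V : Matrix (Fin m) (Fin n) ℝ) (hV : ∀ i j, 0 ≤ V i j)
    (s : Fin n → ℝ) (hs : ∀ j, 0 < s j)
    (hden : ∀ j, 0 < Vᵀ.mulVec (V.mulVec s) j)
    (s' : Fin n → ℝ)
    (hs' : ∀ j, s' j = s j * (Vᵀ.mulVec x j) / (Vᵀ.mulVec (V.mulVec s) j))
    (hstrict : StrictConvexOn ℝ Set.univ
      (fun s' : Fin n → ℝ =>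
        (∑ i, x i ^ 2) - 2 * (∑ i, x i * V.mulVec s' i) +
          ∑ i, (V.mulVec (fun j => s' j ^ 2 / s j) i) * (V.mulVec s i)))
    (heq : ∑ i, (x i - V.mulVec s' i) ^ 2 = ∑ i, (x i - V.mulVec s i) ^ 2) :
    s' = s ∧ Vᵀ.mulVec (fun i => x i - V.mulVec s i) = 0 := by
  set c : Fin n → ℝ := Vᵀ.mulVec x with hc
  set d : Fin n → ℝ := Vᵀ.mulVec (V.mulVec s) with hd
  have hsne : ∀ j, s j ≠ 0 := fun j => (hs j).ne'
  have hdne : ∀ j, d j ≠ 0 := fun j => (hden j).ne'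
  -- c in terms of s'
  have hcs : ∀ j, c j = s' j * d j / s j := by
    intro j
    rw [hs' j]
    field_simp [hsne j, hdne j]
  -- expansion of squares
  have expand : ∀ w : Fin m → ℝ, ∑ i, (x i - w i) ^ 2
      = (∑ i, x i ^ 2) - 2 * (∑ i, x i * w i) + ∑ i, w i ^ 2 := by
    intro w
    have h1 : ∀ i : Fin m, (x i - w i) ^ 2 = x i ^ 2 - 2 * (x i * w i) + w i ^ 2 :=
      fun i => by ring
    simp_rw [h1]
    rw [Finset.sum_add_distrib, Finset.sum_sub_distrib, Finset.mul_sum]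
  -- sum swaps
  have swap1 : ∀ t : Fin n → ℝ, ∑ i, x i * V.mulVec t i = ∑ j, t j * c j := by
    intro t
    simp only [hc, Matrix.mulVec, dotProduct, Matrix.transpose_apply,
      Finset.mul_sum]
    rw [Finset.sum_comm]
    exact Finset.sum_congr rfl fun j _ => Finset.sum_congr rfl fun i _ => by ring
  have swap2 : ∀ t : Fin n → ℝ,
      ∑ i, (V.mulVec t i) * (V.mulVec s i) = ∑ j, t j * d j := by
    intro t
    have h1 : ∀ i : Fin m, (V.mulVec t i) * (V.mulVec s i)
        = ∑ j, t j * (V i j * V.mulVec s i) := by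
      intro i
      rw [Matrix.mulVec, dotProduct, Finset.sum_mul]
      exact Finset.sum_congr rfl fun j _ => by ring
    simp_rw [h1]
    rw [Finset.sum_comm]
    refine Finset.sum_congr rfl fun j _ => ?_
    rw [← Finset.mul_sum]
    congr 1
  -- Cauchy-Schwarz per row
  have cs : ∀ i, (V.mulVec s' i) ^ 2
      ≤ (V.mulVec (fun j => s' j ^ 2 / s j) i) * (V.mulVec s i) := by
    intro i
    simp only [Matrix.mulVec, dotProduct]
    refine Finset.sum_sq_le_sum_mul_sum_of_sq_eq_mul _
      (fun j _ => mul_nonneg (hV i j) (div_nonneg (sq_nonneg _) (hs j).le))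
      (fun j _ => mul_nonneg (hV i j) (hs j).le) (fun j _ => ?_)
    field_simp [hsne j]
  -- main inequality chain
  have hN' : ∑ i, (V.mulVec s' i) ^ 2
      ≤ ∑ i, (V.mulVec (fun j => s' j ^ 2 / s j) i) * (V.mulVec s i) :=
    Finset.sum_le_sum fun i _ => cs i
  have hA : ∑ i, (x i - V.mulVec s' i) ^ 2
      = (∑ i, x i ^ 2) - 2 * (∑ j, s' j * c j) + ∑ i, (V.mulVec s' i) ^ 2 := by
    rw [expand, swap1]
  have hB : ∑ i, (x i - V.mulVec s i) ^ 2
      = (∑ i, x i ^ 2) - 2 * (∑ j, s j * c j) + ∑ j, s j * d j := by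
    rw [expand, swap1]
    congr 1
    have : ∀ i : Fin m, (V.mulVec s i) ^ 2 = (V.mulVec s i) * (V.mulVec s i) :=
      fun i => sq (V.mulVec s i)
    simp_rw [this]
    exact swap2 s
  have hM' : ∑ i, (V.mulVec (fun j => s' j ^ 2 / s j) i) * (V.mulVec s i)
      = ∑ j, (s' j ^ 2 / s j) * d j := swap2 _
  -- combine: ∑ d/s (s - s')² ≤ 0
  have key : ∑ j, d j / s j * (s j - s' j) ^ 2 ≤ 0 := by
    have h1 : (∑ j, (s' j ^ 2 / s j) * d j) - 2 * (∑ j, s' j * c j)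
        ≥ (∑ j, s j * d j) - 2 * (∑ j, s j * c j) := by
      linarith [heq, hA, hB, hN', hM']
    have h2 : ∑ j, d j / s j * (s j - s' j) ^ 2
        = ((∑ j, s j * d j) - 2 * (∑ j, s j * c j))
          - ((∑ j, (s' j ^ 2 / s j) * d j) - 2 * (∑ j, s' j * c j)) := by
      rw [Finset.mul_sum, Finset.mul_sum, ← Finset.sum_sub_distrib,
        ← Finset.sum_sub_distrib, ← Finset.sum_sub_distrib]
      refine Finset.sum_congr rfl fun j _ => ?_
      rw [hcs j]
      field_simp [hsne j, hdne j]
      ring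
    linarith [h1, h2]
  have hzero : ∀ j, d j / s j * (s j - s' j) ^ 2 = 0 := by
    have hnn : ∀ j ∈ Finset.univ, (0:ℝ) ≤ d j / s j * (s j - s' j) ^ 2 :=
      fun j _ => mul_nonneg (div_nonneg (hden j).le (hs j).le) (sq_nonneg _)
    intro j
    exact (Finset.sum_eq_zero_iff_of_nonneg hnn).1 (le_antisymm key (Finset.sum_nonneg hnn)) j
      (Finset.mem_univ j)
  have hss : s' = s := by
    funext j
    have h := hzero j
    have hpos : 0 < d j / s j := div_pos (hden j) (hs j)
    have hsq : (s j - s' j) ^ 2 = 0 := by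
      rcases mul_eq_zero.1 h with h' | h'
      · exact absurd h' hpos.ne'
      · exact h'
    have := pow_eq_zero_iff (n := 2) (by norm_num) |>.1 hsq
    linarith
  refine ⟨hss, ?_⟩
  funext j
  have hcd : c j = d j := by
    have h := hcs j
    rw [hss] at h
    rwa [mul_comm, mul_div_assoc, div_self (hsne j), mul_one] at h
  show (Vᵀ.mulVec (fun i => x i - V.mulVec s i)) j = 0
  have hlin : (Vᵀ.mulVec (fun i => x i - V.mulVec s i)) j = c j - d j := by
    simp only [hc, hd, Matrix.mulVec, dotProduct, Matrix.transpose_apply]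
    rw [← Finset.sum_sub_distrib]
    exact Finset.sum_congr rfl fun i _ => by ring
  rw [hlin, hcd, sub_self]
end
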